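/- Let p ≥ 2 be an integer and ζ = exp(2πi/p). For t, z ∈ ℂ and x ∈ [0,1], set R_{p−1}(x,t,z) := ∑_{k=1}^{p−1} (∑_{n≥0} R_{n,p−1,k}(x)·z^n)·t^k, and define R̃_p(x,t,z) := (z^{p−1} + t·z·∫_0^x (d/dv)[(1−v)·R_{p−1}(v,t,z)]·e^{−vtz} dv)·e^{xtz}. Then for every x ∈ [0,1], every z ∈ ℂ with |z| < 1, and every 1 ≤ k ≤ p: ∑_{n≥0} R_{n,p,k}(x)·z^n = (1/p)·∑_{j=0}^{p−1} ζ^{−kj}·R̃_p(x, ζ^j, z). -/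

import Mathlib

open MeasureTheory intervalIntegral

/-- `R n p k x` : probability that, in a dart game with `p` remaining players where the
probability of beating the best throw so far is `x`, the `k`-th player in throwing order
wins after exactly `n` further throws. -/
noncomputable def R : ℕ → ℕ → ℕ → ℝ → ℝ
  | 0, p, k, _ => if p = 1 ∧ k = 1 then 1 else 0
  | n + 1, p, k, x =>
      if p ≤ 1 then 0
      else if k = 1 then ∫ v in (0:ℝ)..x, R n p p v
      else (1 - x) * R n (p - 1) (k - 1) x + ∫ v in (0:ℝ)..x, R n p (k - 1) v

/-- `Rgen p x t z = ∑_{k=1}^{p} (∑_{n≥0} R_{n,p,k}(x)·z^n)·t^k`. -/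
noncomputable def Rgen (p : ℕ) (x : ℝ) (t z : ℂ) : ℂ :=
  ∑ k ∈ Finset.Icc 1 p, (∑' n : ℕ, (R n p k x : ℂ) * z ^ n) * t ^ k

/-- `R̃_p(x,t,z) = (z^{p−1} + t·z·∫_0^x (d/dv)[(1−v)·R_{p−1}(v,t,z)]·e^{−vtz} dv)·e^{xtz}`. -/
noncomputable def Rtilde (p : ℕ) (x : ℝ) (t z : ℂ) : ℂ :=
  (z ^ (p - 1) + t * z * ∫ v in (0:ℝ)..x,
      deriv (fun w : ℝ => (1 - (w : ℂ)) * Rgen (p - 1) w t z) v *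
        Complex.exp (-(v : ℂ) * t * z)) *
    Complex.exp ((x : ℂ) * t * z)

noncomputable def Rd : ℕ → ℕ → ℕ → ℝ → ℝ
  | 0, _, _, _ => 0
  | n + 1, p, k, x =>
      if p ≤ 1 then 0
      else if k = 1 then R n p p x
      else -(R n (p - 1) (k - 1) x) + (1 - x) * Rd n (p - 1) (k - 1) x + R n p (k - 1) x

lemma R_cont_and_deriv (n : ℕ) :
    (∀ p k, Continuous (R n p k)) ∧ (∀ p k x, HasDerivAt (R n p k) (Rd n p k x) x) := by
  induction n with
  | zero =>
    constructor
    · intro p k; simp only [R]; exact continuous_const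
    · intro p k x; simp only [R, Rd]; exact hasDerivAt_const _ _
  | succ n ih =>
    obtain ⟨ihc, ihd⟩ := ih
    have hd : ∀ p k x, HasDerivAt (R (n+1) p k) (Rd (n+1) p k x) x := by
      intro p k x
      by_cases hp : p ≤ 1
      · have : R (n+1) p k = fun _ => (0:ℝ) := by funext y; simp [R, hp]
        rw [this]; simp only [Rd, hp, if_pos]
        exact hasDerivAt_const _ _
      · by_cases hk : k = 1
        · have : R (n+1) p k = fun y => ∫ v in (0:ℝ)..y, R n p p v := by
            funext y; simp [R, hp, hk]
          rw [this]
          have := intervalIntegral.integral_hasDerivAt_right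
            ((ihc p p).intervalIntegrable 0 x)
            ((ihc p p).stronglyMeasurableAtFilter _ _)
            (ihc p p).continuousAt
          simpa [Rd, hp, hk] using this
        · have : R (n+1) p k = fun y =>
              (1 - y) * R n (p-1) (k-1) y + ∫ v in (0:ℝ)..y, R n p (k-1) v := by
            funext y; simp [R, hp, hk]
          rw [this]
          have h1 : HasDerivAt (fun y : ℝ => (1 - y) * R n (p-1) (k-1) y)
              ((-1) * R n (p-1) (k-1) x + (1 - x) * Rd n (p-1) (k-1) x) x :=
            (((hasDerivAt_id x).const_sub 1)).mul (ihd (p-1) (k-1) x)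
          have h2 : HasDerivAt (fun y : ℝ => ∫ v in (0:ℝ)..y, R n p (k-1) v)
              (R n p (k-1) x) x :=
            intervalIntegral.integral_hasDerivAt_right
              ((ihc p (k-1)).intervalIntegrable 0 x)
              ((ihc p (k-1)).stronglyMeasurableAtFilter _ _)
              (ihc p (k-1)).continuousAt
          have := h1.add h2
          have heq : Rd (n+1) p k x =
              (-1) * R n (p-1) (k-1) x + (1 - x) * Rd n (p-1) (k-1) x + R n p (k-1) x := by
            simp only [Rd, if_neg hp, if_neg hk]; ring
          rw [heq]; exact this
    refine ⟨fun p k => ?_, hd⟩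
    have : Differentiable ℝ (R (n+1) p k) := fun x => (hd p k x).differentiableAt
    exact this.continuous

lemma R_cont (n p k : ℕ) : Continuous (R n p k) := (R_cont_and_deriv n).1 p k
lemma R_hasDerivAt (n p k : ℕ) (x : ℝ) : HasDerivAt (R n p k) (Rd n p k x) x :=
  (R_cont_and_deriv n).2 p k x

lemma Rd_cont (n p k : ℕ) : Continuous (Rd n p k) := by
  induction n generalizing p k with
  | zero => simp only [Rd]; exact continuous_const
  | succ n ih =>
    by_cases hp : p ≤ 1
    · have : Rd (n+1) p k = fun _ => (0:ℝ) := by funext y; simp [Rd, hp]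
      rw [this]; exact continuous_const
    · by_cases hk : k = 1
      · have : Rd (n+1) p k = R n p p := by funext y; simp [Rd, hp, hk]
        rw [this]; exact R_cont n p p
      · have : Rd (n+1) p k = fun y =>
            -(R n (p-1) (k-1) y) + (1 - y) * Rd n (p-1) (k-1) y + R n p (k-1) y := by
          funext y; simp [Rd, hp, hk]
        rw [this]
        exact (((R_cont n (p-1) (k-1)).neg.add
          (((continuous_const.sub continuous_id)).mul (ih (p-1) (k-1)))).add
          (R_cont n p (k-1)))

lemma R_mem_Icc (n : ℕ) : ∀ p k, ∀ x ∈ Set.Icc (0:ℝ) 1, R n p k x ∈ Set.Icc (0:ℝ) 1 := by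
  induction n with
  | zero =>
    intro p k x _
    simp only [R]
    split <;> constructor <;> norm_num
  | succ n ih =>
    intro p k x hx
    obtain ⟨hx0, hx1⟩ := hx
    by_cases hp : p ≤ 1
    · simp [R, hp]
    · have hint : ∀ m, (0:ℝ) ≤ ∫ v in (0:ℝ)..x, R n p m v ∧ (∫ v in (0:ℝ)..x, R n p m v) ≤ x := by
        intro m
        constructor
        · apply intervalIntegral.integral_nonneg hx0
          intro u hu
          exact (ih p m u ⟨hu.1, hu.2.trans hx1⟩).1
        · calc (∫ v in (0:ℝ)..x, R n p m v) ≤ ∫ v in (0:ℝ)..x, (1:ℝ) := by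
                apply intervalIntegral.integral_mono_on hx0
                  ((R_cont n p m).intervalIntegrable 0 x)
                  (intervalIntegrable_const)
                intro u hu
                exact (ih p m u ⟨hu.1, hu.2.trans hx1⟩).2
          _ = x := by simp
      by_cases hk : k = 1
      · have h := hint p
        simp only [R, hp, hk, if_neg (by omega : ¬ p ≤ 1), if_pos rfl]
        exact ⟨h.1, h.2.trans hx1⟩
      · have h := hint (k-1)
        have hR := ih (p-1) (k-1) x ⟨hx0, hx1⟩
        simp only [R, if_neg hp, if_neg hk]
        constructor
        · have : (0:ℝ) ≤ (1 - x) * R n (p-1) (k-1) x :=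
            mul_nonneg (by linarith) hR.1
          linarith [h.1]
        · nlinarith [hR.2, h.2, hR.1]

lemma Rd_bound (n : ℕ) : ∀ p k, ∀ x ∈ Set.Icc (0:ℝ) 1, |Rd n p k x| ≤ 2 * n := by
  induction n with
  | zero => intro p k x _; simp [Rd]
  | succ n ih =>
    intro p k x hx
    obtain ⟨hx0, hx1⟩ := hx
    by_cases hp : p ≤ 1
    · simp only [Rd, hp, if_pos]
      simp; positivity
    · by_cases hk : k = 1
      · simp only [Rd, if_neg hp, hk, if_pos rfl]
        have := R_mem_Icc n p p x ⟨hx0, hx1⟩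
        rw [abs_le]
        push_cast
        constructor <;> [linarith [this.1]; linarith [this.2]]
      · simp only [Rd, if_neg hp, if_neg hk]
        have h1 := R_mem_Icc n (p-1) (k-1) x ⟨hx0, hx1⟩
        have h2 := R_mem_Icc n p (k-1) x ⟨hx0, hx1⟩
        have h3 := ih (p-1) (k-1) x ⟨hx0, hx1⟩
        rw [abs_le] at h3 ⊢
        push_cast at h3 ⊢
        have h4 : (1 - x) * Rd n (p-1) (k-1) x ≤ 2 * n := by
          nlinarith [h3.1, h3.2]
        have h5 : -(2 * (n:ℝ)) ≤ (1 - x) * Rd n (p-1) (k-1) x := by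
          nlinarith [h3.1, h3.2]
        constructor <;> [nlinarith [h1.1, h1.2, h2.1, h2.2]; nlinarith [h1.1, h1.2, h2.1, h2.2]]

lemma R_zero_val (n : ℕ) : ∀ p k, 1 ≤ k → k ≤ p →
    R n p k 0 = if k = p ∧ n = k - 1 then 1 else 0 := by
  induction n with
  | zero =>
    intro p k hk1 hkp
    simp only [R]
    congr 1
    · simp only [eq_iff_iff]; omega
  | succ n ih =>
    intro p k hk1 hkp
    by_cases hp : p ≤ 1
    · have : p = 1 ∧ k = 1 := by omega
      simp [R, hp, this.1, this.2]
    · by_cases hk : k = 1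
      · subst hk
        simp only [R, if_neg hp, if_pos rfl, intervalIntegral.integral_same]
        have : ¬ (1 = p ∧ n + 1 = 1 - 1) := by omega
        simp [this]
      · simp only [R, if_neg hp, if_neg hk, intervalIntegral.integral_same, add_zero]
        rw [ih (p-1) (k-1) (by omega) (by omega)]
        have hiff : (k - 1 = p - 1 ∧ n = k - 1 - 1) ↔ (k = p ∧ n + 1 = k - 1) := by omega
        simp only [sub_zero, one_mul]
        split
        · next h => rw [if_pos (hiff.mp h)]
        · next h => rw [if_neg (fun hc => h (hiff.mpr hc))]

noncomputable def Fc (p k : ℕ) (z : ℂ) (x : ℝ) : ℂ := ∑' n : ℕ, (R n p k x : ℂ) * z ^ n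
noncomputable def Fd (p k : ℕ) (z : ℂ) (x : ℝ) : ℂ := ∑' n : ℕ, (Rd n p k x : ℂ) * z ^ n

lemma norm_R_term (n p k : ℕ) (z : ℂ) {x : ℝ} (hx : x ∈ Set.Icc (0:ℝ) 1) :
    ‖(R n p k x : ℂ) * z ^ n‖ ≤ ‖z‖ ^ n := by
  rw [norm_mul, norm_pow, Complex.norm_real, Real.norm_eq_abs]
  have h := R_mem_Icc n p k x hx
  have h1 : |R n p k x| ≤ 1 := abs_le.mpr ⟨by linarith [h.1], h.2⟩
  calc |R n p k x| * ‖z‖ ^ n ≤ 1 * ‖z‖ ^ n :=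
        mul_le_mul_of_nonneg_right h1 (by positivity)
    _ = _ := one_mul _

lemma norm_Rd_term (n p k : ℕ) (z : ℂ) {x : ℝ} (hx : x ∈ Set.Icc (0:ℝ) 1) :
    ‖(Rd n p k x : ℂ) * z ^ n‖ ≤ 2 * n * ‖z‖ ^ n := by
  rw [norm_mul, norm_pow, Complex.norm_real, Real.norm_eq_abs]
  exact mul_le_mul_of_nonneg_right (Rd_bound n p k x hx) (by positivity)

lemma summable_geo {z : ℂ} (hz : ‖z‖ < 1) :
    Summable (fun n : ℕ => ‖z‖ ^ n) :=
  summable_geometric_of_lt_one (norm_nonneg z) hz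

lemma summable_aux {z : ℂ} (hz : ‖z‖ < 1) :
    Summable (fun n : ℕ => 2 * n * ‖z‖ ^ n) := by
  have h := summable_pow_mul_geometric_of_norm_lt_one (R := ℝ) 1
    (r := ‖z‖) (by simpa using hz)
  have := h.mul_left 2
  simpa [pow_one, mul_assoc] using this

lemma summable_Fc {z : ℂ} (hz : ‖z‖ < 1) (p k : ℕ) {x : ℝ}
    (hx : x ∈ Set.Icc (0:ℝ) 1) : Summable (fun n : ℕ => (R n p k x : ℂ) * z ^ n) :=
  Summable.of_norm_bounded (summable_geo hz) (fun n => norm_R_term n p k z hx)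

lemma summable_Fd {z : ℂ} (hz : ‖z‖ < 1) (p k : ℕ) {x : ℝ}
    (hx : x ∈ Set.Icc (0:ℝ) 1) : Summable (fun n : ℕ => (Rd n p k x : ℂ) * z ^ n) :=
  Summable.of_norm_bounded (summable_aux hz) (fun n => norm_Rd_term n p k z hx)

lemma hasDerivAt_Fc {z : ℂ} (hz : ‖z‖ < 1) (p k : ℕ) {x : ℝ}
    (hx : x ∈ Set.Ioo (0:ℝ) 1) : HasDerivAt (Fc p k z) (Fd p k z x) x := by
  refine hasDerivAt_tsum_of_isPreconnected (summable_aux hz) isOpen_Ioo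
    (convex_Ioo (0:ℝ) 1).isPreconnected
    (fun n y _ => ((R_hasDerivAt n p k y).ofReal_comp).mul_const (z ^ n))
    (fun n y hy => norm_Rd_term n p k z (Set.mem_Icc_of_Ioo hy))
    (show (1/2 : ℝ) ∈ Set.Ioo (0:ℝ) 1 by norm_num)
    (summable_Fc hz p k (by norm_num)) hx

lemma continuousOn_Fc {z : ℂ} (hz : ‖z‖ < 1) (p k : ℕ) :
    ContinuousOn (Fc p k z) (Set.Icc (0:ℝ) 1) := by
  refine (tendstoUniformlyOn_tsum (summable_geo hz)
    (fun n x hx => norm_R_term n p k z hx)).continuousOn ?_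
  refine Filter.Frequently.of_forall fun t => ?_
  exact (continuous_finset_sum t fun i _ =>
    ((Complex.continuous_ofReal.comp (R_cont i p k)).mul continuous_const)).continuousOn

lemma continuousOn_Fd {z : ℂ} (hz : ‖z‖ < 1) (p k : ℕ) :
    ContinuousOn (Fd p k z) (Set.Icc (0:ℝ) 1) := by
  refine (tendstoUniformlyOn_tsum (summable_aux hz)
    (fun n x hx => norm_Rd_term n p k z hx)).continuousOn ?_
  refine Filter.Frequently.of_forall fun t => ?_
  exact (continuous_finset_sum t fun i _ =>
    ((Complex.continuous_ofReal.comp (Rd_cont i p k)).mul continuous_const)).continuousOn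

lemma Fd_one {z : ℂ} (hz : ‖z‖ < 1) {p : ℕ} (hp : 2 ≤ p) {x : ℝ}
    (hx : x ∈ Set.Icc (0:ℝ) 1) : Fd p 1 z x = z * Fc p p z x := by
  have hs := summable_Fd hz p 1 hx
  rw [Fd, Summable.tsum_eq_zero_add hs]
  have h0 : (Rd 0 p 1 x : ℂ) * z ^ 0 = 0 := by simp [Rd]
  rw [h0, zero_add]
  have hterm : ∀ n : ℕ, (Rd (n+1) p 1 x : ℂ) * z ^ (n+1) = z * ((R n p p x : ℂ) * z ^ n) := by
    intro n
    have hRd : Rd (n+1) p 1 x = R n p p x := by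
      have hp1 : ¬ p ≤ 1 := by omega
      simp [Rd, hp1]
    rw [hRd]; ring
  simp_rw [hterm]
  rw [tsum_mul_left]
  rfl

lemma Fd_succ {z : ℂ} (hz : ‖z‖ < 1) {p k : ℕ} (hp : 2 ≤ p) (hk : 2 ≤ k) {x : ℝ}
    (hx : x ∈ Set.Icc (0:ℝ) 1) :
    Fd p k z x = z * (-(Fc (p-1) (k-1) z x) + (1 - (x:ℂ)) * Fd (p-1) (k-1) z x
      + Fc p (k-1) z x) := by
  have hs := summable_Fd hz p k hx
  rw [Fd, Summable.tsum_eq_zero_add hs]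
  have h0 : (Rd 0 p k x : ℂ) * z ^ 0 = 0 := by simp [Rd]
  rw [h0, zero_add]
  have hterm : ∀ n : ℕ, (Rd (n+1) p k x : ℂ) * z ^ (n+1)
      = z * (-((R n (p-1) (k-1) x : ℂ) * z ^ n)
          + (1 - (x:ℂ)) * ((Rd n (p-1) (k-1) x : ℂ) * z ^ n)
          + (R n p (k-1) x : ℂ) * z ^ n) := by
    intro n
    have hRd : Rd (n+1) p k x
        = -(R n (p-1) (k-1) x) + (1-x) * Rd n (p-1) (k-1) x + R n p (k-1) x := by
      simp only [Rd, if_neg (by omega : ¬ p ≤ 1), if_neg (by omega : k ≠ 1)]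
    rw [hRd]
    push_cast
    ring
  simp_rw [hterm]
  rw [tsum_mul_left]
  congr 1
  have s1 : Summable (fun n : ℕ => -((R n (p-1) (k-1) x : ℂ) * z ^ n)) :=
    (summable_Fc hz _ _ hx).neg
  have s2 : Summable (fun n : ℕ => (1-(x:ℂ)) * ((Rd n (p-1) (k-1) x : ℂ) * z ^ n)) :=
    (summable_Fd hz _ _ hx).mul_left _
  have s3 := summable_Fc hz p (k-1) hx
  rw [Summable.tsum_add (s1.add s2) s3, Summable.tsum_add s1 s2, tsum_neg, tsum_mul_left]
  rfl

lemma Fc_zero (z : ℂ) {p k : ℕ} (hk1 : 1 ≤ k) (hkp : k ≤ p) :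
    Fc p k z 0 = if k = p then z ^ (p-1) else 0 := by
  rw [Fc]
  have hterm : ∀ n : ℕ, (R n p k 0 : ℂ) * z ^ n
      = if k = p then (if n = p - 1 then z ^ (p-1) else 0) else 0 := by
    intro n
    rw [R_zero_val n p k hk1 hkp]
    by_cases h1 : k = p
    · by_cases h2 : n = p - 1
      · rw [if_pos ⟨h1, by omega⟩, if_pos h1, if_pos h2, h2]
        simp
      · rw [if_neg (by omega : ¬(k = p ∧ n = k - 1)), if_pos h1, if_neg h2]
        simp
    · rw [if_neg (by tauto), if_neg h1]
      simp
  simp_rw [hterm]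
  by_cases h1 : k = p
  · simp only [h1, if_pos rfl]
    exact tsum_ite_eq (p-1) (fun _ => z ^ (p-1))
  · simp [h1]

noncomputable def Dfun (p : ℕ) (t z : ℂ) (x : ℝ) : ℂ :=
  ∑ k ∈ Finset.Icc 1 (p-1),
    (-(Fc (p-1) k z x) + (1 - (x:ℂ)) * Fd (p-1) k z x) * t ^ k

lemma Rgen_eq_sum_Fc (p : ℕ) (x : ℝ) (t z : ℂ) :
    Rgen p x t z = ∑ k ∈ Finset.Icc 1 p, Fc p k z x * t ^ k := rfl

lemma hasDerivAt_one_sub_mul {z : ℂ} (hz : ‖z‖ < 1) (p : ℕ) (t : ℂ) {x : ℝ}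
    (hx : x ∈ Set.Ioo (0:ℝ) 1) :
    HasDerivAt (fun w : ℝ => (1 - (w:ℂ)) * Rgen (p-1) w t z) (Dfun p t z x) x := by
  have hS : HasDerivAt (fun w : ℝ => Rgen (p-1) w t z)
      (∑ k ∈ Finset.Icc 1 (p-1), Fd (p-1) k z x * t ^ k) x := by
    have he : (fun w : ℝ => Rgen (p-1) w t z)
        = fun w => ∑ k ∈ Finset.Icc 1 (p-1), Fc (p-1) k z w * t ^ k := rfl
    rw [he]
    exact HasDerivAt.fun_sum (fun k _ => (hasDerivAt_Fc hz (p-1) k hx).mul_const _)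
  have h1 : HasDerivAt (fun w : ℝ => (1 - (w:ℂ))) (-1) x := by
    simpa using ((hasDerivAt_id x).ofReal_comp (z := x)).const_sub 1
  have hmul := h1.mul hS
  have heq : (-1 : ℂ) * Rgen (p-1) x t z
        + (1 - (x:ℂ)) * ∑ k ∈ Finset.Icc 1 (p-1), Fd (p-1) k z x * t ^ k
      = Dfun p t z x := by
    rw [Rgen_eq_sum_Fc, Dfun, neg_one_mul, ← Finset.sum_neg_distrib, Finset.mul_sum,
      ← Finset.sum_add_distrib]
    exact Finset.sum_congr rfl fun k _ => by ring
  rw [← heq]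
  exact hmul

lemma hasDerivAt_Rgen {z : ℂ} (hz : ‖z‖ < 1) {p : ℕ} (hp : 2 ≤ p) {t : ℂ}
    (ht : t ^ p = 1) {x : ℝ} (hx : x ∈ Set.Ioo (0:ℝ) 1) :
    HasDerivAt (fun w : ℝ => Rgen p w t z)
      (z * t * (Rgen p x t z + Dfun p t z x)) x := by
  have hx' : x ∈ Set.Icc (0:ℝ) 1 := Set.mem_Icc_of_Ioo hx
  have hS : HasDerivAt (fun w : ℝ => Rgen p w t z)
      (∑ k ∈ Finset.Icc 1 p, Fd p k z x * t ^ k) x := by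
    have he : (fun w : ℝ => Rgen p w t z)
        = fun w => ∑ k ∈ Finset.Icc 1 p, Fc p k z w * t ^ k := rfl
    rw [he]
    exact HasDerivAt.fun_sum (fun k _ => (hasDerivAt_Fc hz p k hx).mul_const _)
  have hins : Finset.Icc 1 p = insert 1 (Finset.Icc 2 p) := by
    ext m; simp only [Finset.mem_Icc, Finset.mem_insert]; omega
  have h1notin : (1:ℕ) ∉ Finset.Icc 2 p := by simp
  have hmap : Finset.Icc 2 p = (Finset.Icc 1 (p-1)).map (addRightEmbedding 1) := by
    rw [Finset.map_add_right_Icc]; congr 1; omega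
  have hins' : Finset.Icc 1 p = insert p (Finset.Icc 1 (p-1)) := by
    ext m; simp only [Finset.mem_Icc, Finset.mem_insert]; omega
  have hpnotin : p ∉ Finset.Icc 1 (p-1) := by simp only [Finset.mem_Icc]; omega
  have e1 : ∑ k ∈ Finset.Icc 1 p, Fd p k z x * t ^ k
      = z * Fc p p z x * t + ∑ j ∈ Finset.Icc 1 (p-1),
          (z * (-(Fc (p-1) j z x) + (1 - (x:ℂ)) * Fd (p-1) j z x + Fc p j z x)) * t ^ (j+1) := by
    rw [hins, Finset.sum_insert h1notin, Fd_one hz hp hx', pow_one]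
    congr 1
    rw [hmap, Finset.sum_map]
    apply Finset.sum_congr rfl
    intro j hj
    have hj' := Finset.mem_Icc.mp hj
    simp only [addRightEmbedding_apply]
    rw [Fd_succ hz hp (by omega) hx']
    norm_num
  have e2 : z * t * (Rgen p x t z + Dfun p t z x)
      = z * Fc p p z x * t + ∑ j ∈ Finset.Icc 1 (p-1),
          (z * (-(Fc (p-1) j z x) + (1 - (x:ℂ)) * Fd (p-1) j z x + Fc p j z x)) * t ^ (j+1) := by
    rw [Rgen_eq_sum_Fc, Dfun, hins', Finset.sum_insert hpnotin, ht, mul_one, add_assoc,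
      ← Finset.sum_add_distrib, mul_add, Finset.mul_sum]
    congr 1
    · ring
    · exact Finset.sum_congr rfl fun j _ => by ring
  rw [show z * t * (Rgen p x t z + Dfun p t z x)
      = ∑ k ∈ Finset.Icc 1 p, Fd p k z x * t ^ k from e2.trans e1.symm]
  exact hS

lemma continuousOn_RgenFun {z : ℂ} (hz : ‖z‖ < 1) (p : ℕ) (t : ℂ) :
    ContinuousOn (fun w : ℝ => Rgen p w t z) (Set.Icc (0:ℝ) 1) := by
  have he : (fun w : ℝ => Rgen p w t z)
      = fun w => ∑ k ∈ Finset.Icc 1 p, Fc p k z w * t ^ k := rfl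
  rw [he]
  exact continuousOn_finset_sum _ fun k _ => (continuousOn_Fc hz p k).mul continuousOn_const

lemma continuousOn_Dfun {z : ℂ} (hz : ‖z‖ < 1) (p : ℕ) (t : ℂ) :
    ContinuousOn (Dfun p t z) (Set.Icc (0:ℝ) 1) := by
  apply continuousOn_finset_sum _ fun k _ => ?_
  exact (((continuousOn_Fc hz (p-1) k).neg).add
    (((continuous_const.sub Complex.continuous_ofReal).continuousOn).mul
      (continuousOn_Fd hz (p-1) k))).mul continuousOn_const

lemma Rgen_zero {z : ℂ} {p : ℕ} (hp : 2 ≤ p) {t : ℂ} (ht : t ^ p = 1) :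
    Rgen p 0 t z = z ^ (p - 1) := by
  rw [Rgen_eq_sum_Fc]
  rw [Finset.sum_congr rfl (fun k hk => by
    rw [Fc_zero z (Finset.mem_Icc.mp hk).1 (Finset.mem_Icc.mp hk).2])]
  simp_rw [ite_mul, zero_mul]
  rw [Finset.sum_ite_eq' (Finset.Icc 1 p) p (fun k => z ^ (p-1) * t ^ k)]
  rw [if_pos (Finset.mem_Icc.mpr ⟨by omega, le_refl p⟩), ht, mul_one]

lemma Rgen_eq_Rtilde {z : ℂ} (hz : ‖z‖ < 1) {p : ℕ} (hp : 2 ≤ p) {t : ℂ}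
    (ht : t ^ p = 1) {x : ℝ} (hx : x ∈ Set.Icc (0:ℝ) 1) :
    Rgen p x t z = Rtilde p x t z := by
  obtain ⟨hx0, hx1⟩ := hx
  -- a.e. identification of the derivative appearing in Rtilde
  have hae : ∀ᵐ v ∂(volume : Measure ℝ), v ∈ Set.uIoc (0:ℝ) x →
      deriv (fun w : ℝ => (1 - (w:ℂ)) * Rgen (p-1) w t z) v = Dfun p t z v := by
    have hne : ∀ᵐ v ∂(volume : Measure ℝ), v ≠ x := by
      rw [MeasureTheory.ae_iff]
      convert Real.volume_singleton (a := x) using 2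
      ext v; simp
    filter_upwards [hne] with v hv hmem
    rw [Set.uIoc_of_le hx0] at hmem
    have hv1 : v ∈ Set.Ioo (0:ℝ) 1 := by
      refine ⟨hmem.1, lt_of_le_of_ne (hmem.2.trans hx1) (fun h => hv ?_)⟩
      have : x = 1 := le_antisymm hx1 (h ▸ hmem.2)
      rw [h, this]
    exact (hasDerivAt_one_sub_mul hz p t hv1).deriv
  have hINT : (∫ v in (0:ℝ)..x,
        deriv (fun w : ℝ => (1 - (w:ℂ)) * Rgen (p-1) w t z) v * Complex.exp (-(v:ℂ)*t*z))
      = ∫ v in (0:ℝ)..x, Dfun p t z v * Complex.exp (-(v:ℂ)*t*z) := by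
    apply intervalIntegral.integral_congr_ae
    filter_upwards [hae] with v hv hmem
    rw [hv hmem]
  -- the function g and its derivative
  set g : ℝ → ℂ := fun w => Rgen p w t z * Complex.exp (-(w:ℂ)*t*z) with hgdef
  have hgderiv : ∀ w ∈ Set.Ioo (0:ℝ) x,
      HasDerivAt g (z * t * Dfun p t z w * Complex.exp (-(w:ℂ)*t*z)) w := by
    intro w hw
    have hw1 : w ∈ Set.Ioo (0:ℝ) 1 := ⟨hw.1, lt_of_lt_of_le hw.2 hx1⟩
    have hf : HasDerivAt (fun w : ℝ => -(w:ℂ)*t*z) (-(t*z)) w := by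
      have := ((((hasDerivAt_id w).ofReal_comp (z := w)).neg).mul_const t).mul_const z
      exact this.congr_deriv (by push_cast; ring)
    have hexp : HasDerivAt (fun w : ℝ => Complex.exp (-(w:ℂ)*t*z))
        (Complex.exp (-(w:ℂ)*t*z) * (-(t*z))) w := hf.cexp
    have := (hasDerivAt_Rgen hz hp ht hw1).mul hexp
    exact this.congr_deriv (by ring)
  have hgcont : ContinuousOn g (Set.Icc 0 x) := by
    apply ContinuousOn.mul
    · exact (continuousOn_RgenFun hz p t).mono (Set.Icc_subset_Icc le_rfl hx1)
    · exact (Complex.continuous_exp.comp (by fun_prop)).continuousOn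
  have hintg : IntervalIntegrable
      (fun w => z * t * Dfun p t z w * Complex.exp (-(w:ℂ)*t*z)) volume 0 x := by
    apply ContinuousOn.intervalIntegrable
    rw [Set.uIcc_of_le hx0]
    apply ContinuousOn.mul
    · exact continuousOn_const.mul
        ((continuousOn_Dfun hz p t).mono (Set.Icc_subset_Icc le_rfl hx1))
    · exact (Complex.continuous_exp.comp (by fun_prop)).continuousOn
  have hFTC := intervalIntegral.integral_eq_sub_of_hasDerivAt_of_le hx0 hgcont hgderiv hintg
  have hg0 : g 0 = z ^ (p - 1) := by
    simp only [hgdef, Complex.ofReal_zero, neg_zero, zero_mul, Complex.exp_zero, mul_one]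
    exact Rgen_zero hp ht
  -- final computation
  rw [Rtilde, hINT]
  have hpull : t * z * (∫ v in (0:ℝ)..x, Dfun p t z v * Complex.exp (-(v:ℂ)*t*z))
      = ∫ v in (0:ℝ)..x, z * t * Dfun p t z v * Complex.exp (-(v:ℂ)*t*z) := by
    rw [← intervalIntegral.integral_const_mul]
    apply intervalIntegral.integral_congr
    intro v _
    ring
  rw [hpull, hFTC, hg0]
  have : z ^ (p-1) + (g x - z ^ (p-1)) = g x := by ring
  rw [this, hgdef]
  rw [mul_assoc, ← Complex.exp_add]
  have : -(x:ℂ)*t*z + (x:ℂ)*t*z = 0 := by ring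
  rw [this, Complex.exp_zero, mul_one]

lemma root_inner {p : ℕ} (hp : 2 ≤ p) {k k' : ℕ} (hk1 : 1 ≤ k) (hkp : k ≤ p)
    (hk1' : 1 ≤ k') (hkp' : k' ≤ p) :
    ∑ j ∈ Finset.range p,
        Complex.exp (2 * Real.pi * Complex.I / p) ^ (-(k * j : ℤ)) *
          (Complex.exp (2 * Real.pi * Complex.I / p) ^ j) ^ k'
      = if k' = k then (p:ℂ) else 0 := by
  set ζ : ℂ := Complex.exp (2 * Real.pi * Complex.I / p) with hζdef
  have hprim : IsPrimitiveRoot ζ p := Complex.isPrimitiveRoot_exp p (by omega)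
  have hζ0 : ζ ≠ 0 := Complex.exp_ne_zero _
  have hζp : ζ ^ p = 1 := hprim.pow_eq_one
  have hterm : ∀ j : ℕ, ζ ^ (-(k * j : ℤ)) * (ζ ^ j) ^ k'
      = (ζ ^ ((k' : ℤ) - (k : ℤ))) ^ j := by
    intro j
    rw [← pow_mul, ← zpow_natCast ζ (j * k'), ← zpow_add₀ hζ0,
      ← zpow_natCast (ζ ^ ((k':ℤ) - (k:ℤ))) j, ← zpow_mul]
    congr 1
    push_cast
    ring
  simp_rw [hterm]
  by_cases hkk : k' = k
  · subst hkk
    simp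
  · rw [if_neg hkk]
    have hw1 : ζ ^ ((k' : ℤ) - (k : ℤ)) ≠ 1 := by
      intro h1
      rw [hprim.zpow_eq_one_iff_dvd] at h1
      obtain ⟨c, hc⟩ := h1
      rcases lt_trichotomy c 0 with hc0 | hc0 | hc0
      · have hb : (p:ℤ) * c ≤ -p := by nlinarith
        omega
      · subst hc0
        simp at hc
        omega
      · have hb : (p:ℤ) ≤ p * c := by nlinarith
        omega
    rw [geom_sum_eq hw1]
    have hwp : (ζ ^ ((k' : ℤ) - (k : ℤ))) ^ p = 1 := by
      rw [← zpow_natCast (ζ ^ ((k':ℤ) - (k:ℤ))) p, ← zpow_mul, mul_comm, zpow_mul,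
        zpow_natCast, hζp, one_zpow]
    rw [hwp]
    simp


/-- For `p ≥ 2`, `ζ = e^{2πi/p}`, `x ∈ [0,1]`, `|z| < 1` and `1 ≤ k ≤ p`:
`∑_{n≥0} R_{n,p,k}(x)·z^n = (1/p)·∑_{j=0}^{p−1} ζ^{−kj}·R̃_p(x, ζ^j, z)`. -/
theorem Rgen_root_of_unity_extraction (p : ℕ) (hp : 2 ≤ p) (x : ℝ)
    (hx : x ∈ Set.Icc (0:ℝ) 1) (z : ℂ) (hz : ‖z‖ < 1)
    (k : ℕ) (hk1 : 1 ≤ k) (hkp : k ≤ p) :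
    (∑' n : ℕ, (R n p k x : ℂ) * z ^ n)
      = (1 / p) * ∑ j ∈ Finset.range p,
          Complex.exp (2 * Real.pi * Complex.I / p) ^ (-(k * j : ℤ)) *
            Rtilde p x (Complex.exp (2 * Real.pi * Complex.I / p) ^ j) z := by
  set ζ : ℂ := Complex.exp (2 * Real.pi * Complex.I / p) with hζdef
  have hprim : IsPrimitiveRoot ζ p := Complex.isPrimitiveRoot_exp p (by omega)
  have hζp : ζ ^ p = 1 := hprim.pow_eq_one
  have hRt : ∀ j : ℕ, Rtilde p x (ζ ^ j) z = Rgen p x (ζ ^ j) z := by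
    intro j
    refine (Rgen_eq_Rtilde hz hp ?_ hx).symm
    rw [← pow_mul, mul_comm, pow_mul, hζp, one_pow]
  simp only [hRt]
  have key : ∑ j ∈ Finset.range p,
        ζ ^ (-(k * j : ℤ)) * Rgen p x (ζ ^ j) z = (p:ℂ) * Fc p k z x := by
    simp_rw [Rgen_eq_sum_Fc, Finset.mul_sum]
    rw [Finset.sum_comm]
    calc ∑ k' ∈ Finset.Icc 1 p, ∑ j ∈ Finset.range p,
            ζ ^ (-(k * j : ℤ)) * (Fc p k' z x * (ζ ^ j) ^ k')
        = ∑ k' ∈ Finset.Icc 1 p, Fc p k' z x *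
            ∑ j ∈ Finset.range p, ζ ^ (-(k * j : ℤ)) * (ζ ^ j) ^ k' := by
          refine Finset.sum_congr rfl fun k' _ => ?_
          rw [Finset.mul_sum]
          exact Finset.sum_congr rfl fun j _ => by ring
      _ = ∑ k' ∈ Finset.Icc 1 p, Fc p k' z x * (if k' = k then (p:ℂ) else 0) := by
          refine Finset.sum_congr rfl fun k' hk' => ?_
          have h := Finset.mem_Icc.mp hk'
          rw [root_inner hp hk1 hkp h.1 h.2]
      _ = (p:ℂ) * Fc p k z x := by
          simp_rw [mul_ite, mul_zero]
          rw [Finset.sum_ite_eq' (Finset.Icc 1 p) k (fun k' => Fc p k' z x * (p:ℂ))]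
          rw [if_pos (Finset.mem_Icc.mpr ⟨hk1, hkp⟩), mul_comm]
  rw [show (∑' n : ℕ, (R n p k x : ℂ) * z ^ n) = Fc p k z x from rfl, key]
  have hpne : (p:ℂ) ≠ 0 := Nat.cast_ne_zero.mpr (by omega)
  field_simp
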